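/- Let G be a group, and let H be a self-rooted subgroup of G (root_G(H) = H) such that H = N_G(H). If g ∈ Comm_G(H) and the subgroup generated by H and gHg⁻¹ contains H ∩ gHg⁻¹ with finite index, with ⟨H, gHg⁻¹⟩ = H forced by self-rootedness, then g ∈ N_G(H); hence Comm_G(H) = N_G(H). -/

import Mathlib

open Pointwise

private lemma fg_smul_conj {G : Type*} [Group G] (g : ConjAct G) {H : Subgroup G}
    (h : H.FG) : (g • H).FG := by
  classical
  obtain ⟨S, hS⟩ := h
  refine ⟨S.image (MulDistribMulAction.toMonoidEnd (ConjAct G) G g), ?_⟩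
  rw [Finset.coe_image]
  exact (MonoidHom.map_closure (MulDistribMulAction.toMonoidEnd (ConjAct G) G g : G →* G) _).symm.trans
    (by rw [hS]; rfl)

private lemma smul_le_of_comm {G : Type*} [Group G]
    (hGS : ∀ A B : Subgroup G, A.FG → B.FG → (A ⊓ B).relIndex A ≠ 0 →
      (A ⊓ B).relIndex B ≠ 0 → (A ⊓ B).relIndex (A ⊔ B) ≠ 0)
    (H : Subgroup G) (hfg : H.FG)
    (hroot : ∀ K : Subgroup G, H ≤ K → H.relIndex K ≠ 0 → K ≤ H)
    {g : G} (hg : g ∈ Subgroup.Commensurable.commensurator H) :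
    ConjAct.toConjAct g • H ≤ H := by
  set B := ConjAct.toConjAct g • H with hB
  rw [Subgroup.Commensurable.commensurator_mem_iff] at hg
  obtain ⟨h1, h2⟩ := hg
  have hBfg : B.FG := fg_smul_conj _ hfg
  have k1 : (H ⊓ B).relIndex H ≠ 0 := by rwa [Subgroup.inf_relIndex_left]
  have k2 : (H ⊓ B).relIndex B ≠ 0 := by rwa [Subgroup.inf_relIndex_right]
  have hsup := hGS H B hfg hBfg k1 k2
  have hH : H.relIndex (H ⊔ B) ≠ 0 := fun h0 =>
    hsup (Subgroup.relIndex_eq_zero_of_le_left inf_le_left h0)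
  exact le_sup_right.trans (hroot (H ⊔ B) le_sup_left hH)

/-- If `G` satisfies the Greenberg–Stallings property, `H` is a finitely generated
self-rooted subgroup with `H = N_G(H)`, then `Comm_G(H) = N_G(H)`. -/
theorem commensurator_eq_normalizer_of_selfRooted {G : Type*} [Group G]
    (hGS : ∀ A B : Subgroup G, A.FG → B.FG → (A ⊓ B).relIndex A ≠ 0 →
      (A ⊓ B).relIndex B ≠ 0 → (A ⊓ B).relIndex (A ⊔ B) ≠ 0)
    (H : Subgroup G) (hfg : H.FG)
    (hroot : ∀ K : Subgroup G, H ≤ K → H.relIndex K ≠ 0 → K ≤ H)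
    (hnorm : Subgroup.normalizer (H : Set G) = H) :
    Subgroup.Commensurable.commensurator H = Subgroup.normalizer (H : Set G) := by
  apply le_antisymm
  · intro g hg
    have h1 : ConjAct.toConjAct g • H ≤ H := smul_le_of_comm hGS H hfg hroot hg
    have h2 : ConjAct.toConjAct g⁻¹ • H ≤ H :=
      smul_le_of_comm hGS H hfg hroot (inv_mem hg)
    have h3 : H ≤ ConjAct.toConjAct g • H := by
      have := Subgroup.pointwise_smul_le_pointwise_smul_iff
        (a := ConjAct.toConjAct g) (S := ConjAct.toConjAct g⁻¹ • H) (T := H) |>.mpr h2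
      rwa [map_inv, smul_inv_smul] at this
    have heq : ConjAct.toConjAct g • H = H := le_antisymm h1 h3
    rw [Subgroup.mem_normalizer_iff]
    intro h
    constructor
    · intro hh
      have : g * h * g⁻¹ ∈ ConjAct.toConjAct g • H := by
        rw [← ConjAct.toConjAct_smul]
        exact Subgroup.smul_mem_pointwise_smul _ _ _ hh
      rwa [heq] at this
    · intro hh
      rw [← heq] at hh
      rw [← ConjAct.toConjAct_smul g h] at hh
      exact (Subgroup.smul_mem_pointwise_smul_iff).mp hh
  · intro g hg
    rw [Subgroup.Commensurable.commensurator_mem_iff]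
    have heq : ConjAct.toConjAct g • H = H := by
      ext x
      rw [Subgroup.mem_pointwise_smul_iff_inv_smul_mem, ← map_inv, ConjAct.toConjAct_smul,
        inv_inv]
      simpa using (Subgroup.mem_normalizer_iff.mp (inv_mem hg) x).symm
    rw [heq]
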